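/- Let G be a group and let A_j(G) = {σ ∈ Aut(G) : σ(g)g⁻¹ ∈ Γ_{j+1}(G) for all g ∈ G} be the Andreadakis filtration. Then A_*(G) is strongly central: for all i, j ≥ 1 and σ ∈ A_i(G), τ ∈ A_j(G), the commutator [σ,τ] = στσ⁻¹τ⁻¹ belongs to A_{i+j}(G). -/

import Mathlib

open Subgroup

open scoped commutatorElement

lemma lcs_succ' {G : Type*} [Group G] (n : ℕ) :
    (⊤ : Subgroup G).lowerCentralSeries (n + 1) = ⁅(⊤ : Subgroup G).lowerCentralSeries n, (⊤ : Subgroup G)⁆ := rfl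

/-- Bilinearity of the lower central series (0-based indexing):
`⁅Γ_n, Γ_m⁆ ≤ Γ_{n+m+1}`. -/
lemma lcs_commutator_le {G : Type*} [Group G] :
    ∀ (m n : ℕ), ⁅(⊤ : Subgroup G).lowerCentralSeries n, (⊤ : Subgroup G).lowerCentralSeries m⁆ ≤
      (⊤ : Subgroup G).lowerCentralSeries (n + m + 1) := by
  intro m
  induction m with
  | zero =>
    intro n
    rw [Subgroup.lowerCentralSeries_zero]
    exact le_of_eq (lcs_succ' n).symm
  | succ m ih =>
    intro n
    set N := (⊤ : Subgroup G).lowerCentralSeries (n + (m + 1) + 1) with hN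
    let π := QuotientGroup.mk' N
    have hker : π.ker = N := QuotientGroup.ker_mk' N
    rw [← hker, ← Subgroup.map_eq_bot_iff, Subgroup.map_commutator,
      lcs_succ' m, Subgroup.map_commutator, Subgroup.commutator_comm]
    apply Subgroup.commutator_commutator_eq_bot_of_rotate
    · rw [Subgroup.commutator_comm (Subgroup.map π ⊤), ← Subgroup.map_commutator,
        ← Subgroup.map_commutator, Subgroup.map_eq_bot_iff, hker,
        ← lcs_succ']
      have h1 := ih (n + 1)
      have he : n + 1 + m + 1 = n + (m + 1) + 1 := by omega
      rw [he] at h1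
      exact h1
    · rw [← Subgroup.map_commutator, ← Subgroup.map_commutator,
        Subgroup.map_eq_bot_iff, hker]
      calc ⁅⁅(⊤ : Subgroup G).lowerCentralSeries n, (⊤ : Subgroup G).lowerCentralSeries m⁆, (⊤ : Subgroup G)⁆
          ≤ ⁅(⊤ : Subgroup G).lowerCentralSeries (n + m + 1), (⊤ : Subgroup G)⁆ :=
            Subgroup.commutator_mono (ih n) le_rfl
        _ = (⊤ : Subgroup G).lowerCentralSeries (n + m + 1 + 1) := (lcs_succ' _).symm
        _ = N := by rw [hN, show n + m + 1 + 1 = n + (m + 1) + 1 from by omega]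

/-- The set `{g | σ g * g⁻¹ ∈ N}` is a subgroup when `N` is normal. -/
def fixSubgroup {G : Type*} [Group G] (σ : MulAut G) (N : Subgroup G) [hn : N.Normal] :
    Subgroup G where
  carrier := {g | σ g * g⁻¹ ∈ N}
  one_mem' := by
    show σ 1 * (1 : G)⁻¹ ∈ N
    simpa using one_mem N
  mul_mem' := by
    intro g h hg hh
    have e : σ (g * h) * (g * h)⁻¹ = (σ g * g⁻¹) * (g * (σ h * h⁻¹) * g⁻¹) := by
      rw [map_mul]; group
    show σ (g * h) * (g * h)⁻¹ ∈ N
    rw [e]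
    exact mul_mem hg (hn.conj_mem _ hh g)
  inv_mem' := by
    intro g hg
    show σ g⁻¹ * g⁻¹⁻¹ ∈ N
    have e : σ g⁻¹ * g⁻¹⁻¹ = g⁻¹ * (σ g * g⁻¹)⁻¹ * (g⁻¹)⁻¹ := by
      rw [map_inv]; group
    rw [e]
    exact hn.conj_mem _ (inv_mem hg) g⁻¹

/-- Pure group-theoretic identity used in the key lemma. -/
lemma comm_expand {H : Type*} [Group H] (A X B Y : H)
    (hA : ∀ z : H, Commute A z) (hXB : Commute X B) (hCB : Commute ⁅X, Y⁆ B) :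
    ⁅A * X, B * Y⁆ = ⁅X, Y⁆ := by
  have c1 : A * (X * (B * Y) * X⁻¹) * A⁻¹ = X * (B * Y) * X⁻¹ := by
    rw [(hA _).eq, mul_inv_cancel_right]
  calc ⁅A * X, B * Y⁆
      = A * (X * (B * Y) * X⁻¹) * A⁻¹ * (B * Y)⁻¹ := by
        rw [commutatorElement_def, mul_inv_rev]; group
    _ = (X * (B * Y) * X⁻¹) * (B * Y)⁻¹ := by rw [c1]
    _ = B * ⁅X, Y⁆ * B⁻¹ := by
        rw [commutatorElement_def]
        rw [show X * (B * Y) = B * (X * Y) by rw [← mul_assoc, hXB.eq, mul_assoc]]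
        group
    _ = ⁅X, Y⁆ := by rw [hCB.symm.eq, mul_inv_cancel_right]

/-- Key identity for the main theorem. -/
lemma expand2 {G : Type*} [Group G] (σ τ : MulAut G) (h : G) :
    σ (τ h) * (τ (σ h))⁻¹ =
      (σ (τ h * h⁻¹) * (τ h * h⁻¹)⁻¹) * ⁅τ h * h⁻¹, σ h * h⁻¹⁆ *
        (τ (σ h * h⁻¹) * (σ h * h⁻¹)⁻¹)⁻¹ := by
  simp only [map_mul, map_inv, commutatorElement_def]
  group

/-- Key lemma: if `σ(g)g⁻¹ ∈ Γ_{i+1}` for all `g`, then for `g ∈ Γ_{k+1}`,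
`σ(g)g⁻¹ ∈ Γ_{i+k+1}` (0-based indexing). -/
lemma key_lemma {G : Type*} [Group G] (i : ℕ) (σ : MulAut G)
    (hσ : ∀ g : G, σ g * g⁻¹ ∈ (⊤ : Subgroup G).lowerCentralSeries i) :
    ∀ k : ℕ, ∀ g ∈ (⊤ : Subgroup G).lowerCentralSeries k, σ g * g⁻¹ ∈ (⊤ : Subgroup G).lowerCentralSeries (i + k) := by
  intro k
  induction k with
  | zero => intro g _; simpa using hσ g
  | succ k ih =>
    have hle : (⊤ : Subgroup G).lowerCentralSeries (k + 1) ≤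
        fixSubgroup σ ((⊤ : Subgroup G).lowerCentralSeries (i + (k + 1))) := by
      rw [lcs_succ', Subgroup.commutator_le]
      intro x hx y _
      show σ ⁅x, y⁆ * ⁅x, y⁆⁻¹ ∈ (⊤ : Subgroup G).lowerCentralSeries (i + (k + 1))
      set N := (⊤ : Subgroup G).lowerCentralSeries (i + (k + 1)) with hNdef
      have ha : σ x * x⁻¹ ∈ (⊤ : Subgroup G).lowerCentralSeries (i + k) := ih x hx
      have hb : σ y * y⁻¹ ∈ (⊤ : Subgroup G).lowerCentralSeries i := hσ y
      have hax : σ x = (σ x * x⁻¹) * x := by group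
      have hby : σ y = (σ y * y⁻¹) * y := by group
      -- work in the quotient G ⧸ N
      have mem_iff : ∀ u v : G, ((u : G ⧸ N) = (v : G ⧸ N)) → u * v⁻¹ ∈ N := by
        intro u v huv
        have h1 : v⁻¹ * u ∈ N := (QuotientGroup.eq (s := N)).mp huv.symm
        have h2 : v * (v⁻¹ * u) * v⁻¹ ∈ N :=
          (Subgroup.lowerCentralSeries_normal ⊤ (i + (k + 1))).conj_mem _ h1 v
        have e : v * (v⁻¹ * u) * v⁻¹ = u * v⁻¹ := by group
        rwa [e] at h2
      apply mem_iff
      have hA : ∀ z : G ⧸ N, Commute (((σ x * x⁻¹ : G) : G ⧸ N)) z := by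
        intro z
        induction z using QuotientGroup.induction_on with
        | H g =>
          apply commutatorElement_eq_one_iff_commute.mp
          rw [show ⁅((σ x * x⁻¹ : G) : G ⧸ N), (g : G ⧸ N)⁆ =
              ((⁅σ x * x⁻¹, g⁆ : G) : G ⧸ N) by simp [commutatorElement_def]; group]
          rw [QuotientGroup.eq_one_iff]
          have h1 : ⁅σ x * x⁻¹, g⁆ ∈ ⁅(⊤ : Subgroup G).lowerCentralSeries (i + k), (⊤ : Subgroup G)⁆ :=
            Subgroup.commutator_mem_commutator ha (Subgroup.mem_top g)
          rw [← lcs_succ'] at h1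
          exact h1
      have hXB : Commute ((x : G ⧸ N)) (((σ y * y⁻¹ : G) : G ⧸ N)) := by
        apply commutatorElement_eq_one_iff_commute.mp
        rw [show ⁅(x : G ⧸ N), ((σ y * y⁻¹ : G) : G ⧸ N)⁆ =
            ((⁅x, σ y * y⁻¹⁆ : G) : G ⧸ N) by simp [commutatorElement_def]; group]
        rw [QuotientGroup.eq_one_iff]
        have h1 : ⁅x, σ y * y⁻¹⁆ ∈ ⁅(⊤ : Subgroup G).lowerCentralSeries k, (⊤ : Subgroup G).lowerCentralSeries i⁆ :=
          Subgroup.commutator_mem_commutator hx hb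
        have h2 := lcs_commutator_le i k h1
        exact Subgroup.lowerCentralSeries_antitone (S := ⊤) (by omega) h2
      have hCB : Commute (⁅(x : G ⧸ N), (y : G ⧸ N)⁆) (((σ y * y⁻¹ : G) : G ⧸ N)) := by
        apply commutatorElement_eq_one_iff_commute.mp
        rw [show ⁅⁅(x : G ⧸ N), (y : G ⧸ N)⁆, ((σ y * y⁻¹ : G) : G ⧸ N)⁆ =
            ((⁅⁅x, y⁆, σ y * y⁻¹⁆ : G) : G ⧸ N) by
              simp only [commutatorElement_def, QuotientGroup.mk_mul, QuotientGroup.mk_inv]]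
        rw [QuotientGroup.eq_one_iff]
        have hxy : ⁅x, y⁆ ∈ (⊤ : Subgroup G).lowerCentralSeries (k + 1) := by
          rw [lcs_succ']
          exact Subgroup.commutator_mem_commutator hx (Subgroup.mem_top y)
        have h1 : ⁅⁅x, y⁆, σ y * y⁻¹⁆ ∈
            ⁅(⊤ : Subgroup G).lowerCentralSeries (k + 1), (⊤ : Subgroup G).lowerCentralSeries i⁆ :=
          Subgroup.commutator_mem_commutator hxy hb
        have h2 := lcs_commutator_le i (k + 1) h1
        exact Subgroup.lowerCentralSeries_antitone (S := ⊤) (by omega) h2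
      calc ((σ ⁅x, y⁆ : G) : G ⧸ N)
          = ⁅((σ x : G) : G ⧸ N), ((σ y : G) : G ⧸ N)⁆ := by
            simp [commutatorElement_def]
        _ = ⁅((σ x * x⁻¹ : G) : G ⧸ N) * (x : G ⧸ N),
              ((σ y * y⁻¹ : G) : G ⧸ N) * (y : G ⧸ N)⁆ := by
            simp
        _ = ⁅(x : G ⧸ N), (y : G ⧸ N)⁆ := comm_expand _ _ _ _ hA hXB hCB
        _ = ((⁅x, y⁆ : G) : G ⧸ N) := by simp [commutatorElement_def]
    intro g hg
    exact hle hg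

/-- The Andreadakis filtration `A_j(G) = {σ ∈ Aut G : ∀ g, σ(g)g⁻¹ ∈ Γ_{j+1}(G)}` is
strongly central: if `σ ∈ A_i(G)` and `τ ∈ A_j(G)` then `⁅σ,τ⁆ ∈ A_{i+j}(G)`.
(Here `Γ_{j+1}(G) = (⊤ : Subgroup G).lowerCentralSeries j`.) -/
theorem andreadakis_strongly_central {G : Type*} [Group G] (i j : ℕ)
    (hi : 1 ≤ i) (hj : 1 ≤ j) (σ τ : MulAut G)
    (hσ : ∀ g : G, σ g * g⁻¹ ∈ (⊤ : Subgroup G).lowerCentralSeries i)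
    (hτ : ∀ g : G, τ g * g⁻¹ ∈ (⊤ : Subgroup G).lowerCentralSeries j) :
    ∀ g : G, ⁅σ, τ⁆ g * g⁻¹ ∈ (⊤ : Subgroup G).lowerCentralSeries (i + j) := by
  intro g
  have e3 : ⁅σ, τ⁆ g * g⁻¹ =
      σ (τ (σ⁻¹ (τ⁻¹ g))) * (τ (σ (σ⁻¹ (τ⁻¹ g))))⁻¹ := by
    simp [commutatorElement_def]
  rw [e3, expand2 σ τ (σ⁻¹ (τ⁻¹ g))]
  set h : G := σ⁻¹ (τ⁻¹ g)
  have ha : σ h * h⁻¹ ∈ (⊤ : Subgroup G).lowerCentralSeries i := hσ h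
  have hc : τ h * h⁻¹ ∈ (⊤ : Subgroup G).lowerCentralSeries j := hτ h
  have m1 : σ (τ h * h⁻¹) * (τ h * h⁻¹)⁻¹ ∈ (⊤ : Subgroup G).lowerCentralSeries (i + j) :=
    key_lemma i σ hσ j _ hc
  have m2 : ⁅τ h * h⁻¹, σ h * h⁻¹⁆ ∈ (⊤ : Subgroup G).lowerCentralSeries (i + j) := by
    have h1 : ⁅τ h * h⁻¹, σ h * h⁻¹⁆ ∈
        ⁅(⊤ : Subgroup G).lowerCentralSeries j, (⊤ : Subgroup G).lowerCentralSeries i⁆ :=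
      Subgroup.commutator_mem_commutator hc ha
    have h2 := lcs_commutator_le i j h1
    exact Subgroup.lowerCentralSeries_antitone (S := ⊤) (by omega) h2
  have m3 : τ (σ h * h⁻¹) * (σ h * h⁻¹)⁻¹ ∈ (⊤ : Subgroup G).lowerCentralSeries (i + j) := by
    have := key_lemma j τ hτ i _ ha
    rwa [Nat.add_comm j i] at this
  exact mul_mem (mul_mem m1 m2) (inv_mem m3)
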